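/- Let 0 < s₁ ≤ s₂ and α ≥ α₂ := (s₂ log(1+1/s₂) − 1)/(s₁ log(1+1/s₁) − 1). Then I₁(q) ≥ I₂(q) for all q ∈ [0,1], where I₁, I₂ are the Poisson mutual information functions with gains α, 1 and dark currents s₁, s₂. -/

import Mathlib

open Real Set

noncomputable def Fm (s q : ℝ) : ℝ :=
  -(q + s) * Real.log (q + s) + q * (1 + s) * Real.log (1 + s) + (1 - q) * s * Real.log s

noncomputable def Fd (s q : ℝ) : ℝ :=
  -Real.log (q + s) - 1 + (1 + s) * Real.log (1 + s) - s * Real.log s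

lemma hasDerivAt_Fm (s q : ℝ) (h : 0 < q + s) : HasDerivAt (Fm s) (Fd s q) q := by
  have hq : HasDerivAt (fun q : ℝ => q + s) 1 q := (hasDerivAt_id q).add_const s
  have hlog : HasDerivAt (fun q => Real.log (q + s)) ((q + s)⁻¹) q := by
    exact ((Real.hasDerivAt_log (ne_of_gt h)).comp q hq).congr_deriv (mul_one _)
  have h1 : HasDerivAt (fun q : ℝ => -(q + s) * Real.log (q + s))
      (-Real.log (q + s) - 1) q := by
    have := (hq.neg.mul hlog)
    refine this.congr_deriv ?_
    simp only [Pi.neg_apply]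
    field_simp
    ring
  have h2 : HasDerivAt (fun q : ℝ => q * (1 + s) * Real.log (1 + s))
      ((1 + s) * Real.log (1 + s)) q := by
    have := (hasDerivAt_id q).mul_const ((1 + s) * Real.log (1 + s))
    simpa [mul_assoc] using this
  have h3 : HasDerivAt (fun q : ℝ => (1 - q) * s * Real.log s) (-(s * Real.log s)) q := by
    have := ((hasDerivAt_id q).const_sub 1).mul_const (s * Real.log s)
    simpa [mul_assoc] using this
  have := (h1.add h2).add h3
  exact this.congr_deriv (by unfold Fd; ring)

lemma hasDerivAt_Fd (s q : ℝ) (h : 0 < q + s) : HasDerivAt (Fd s) (-(q + s)⁻¹) q := by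
  have hq : HasDerivAt (fun q : ℝ => q + s) 1 q := (hasDerivAt_id q).add_const s
  have hlog : HasDerivAt (fun q => Real.log (q + s)) ((q + s)⁻¹) q := by
    exact ((Real.hasDerivAt_log (ne_of_gt h)).comp q hq).congr_deriv (mul_one _)
  have := ((hlog.neg.sub_const 1).add_const ((1 + s) * Real.log (1 + s))).sub_const
      (s * Real.log s)
  exact this

lemma Fm_zero (s : ℝ) : Fm s 0 = 0 := by
  unfold Fm; rw [zero_add]; ring

lemma Fm_one (s : ℝ) : Fm s 1 = 0 := by
  unfold Fm; ring

lemma Fm_nonneg (s : ℝ) (hs : 0 < s) {q : ℝ} (hq : q ∈ Icc (0:ℝ) 1) : 0 ≤ Fm s q := by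
  obtain ⟨hq0, hq1⟩ := hq
  have hqs : 0 < q + s := by linarith
  have h1s : 0 < 1 + s := by linarith
  have hA : Real.log (q + s) - Real.log (1 + s) ≤ (q + s) / (1 + s) - 1 := by
    have := Real.log_le_sub_one_of_pos (x := (q + s) / (1 + s)) (by positivity)
    rwa [Real.log_div (ne_of_gt hqs) (ne_of_gt h1s)] at this
  have hB : Real.log (q + s) - Real.log s ≤ (q + s) / s - 1 := by
    have := Real.log_le_sub_one_of_pos (x := (q + s) / s) (by positivity)
    rwa [Real.log_div (ne_of_gt hqs) (ne_of_gt hs)] at this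
  have hA' : q * (1 + s) * (Real.log (q + s) - Real.log (1 + s)) ≤ q * (q - 1) := by
    have := mul_le_mul_of_nonneg_left hA (by positivity : (0:ℝ) ≤ q * (1 + s))
    calc q * (1 + s) * (Real.log (q + s) - Real.log (1 + s))
        ≤ q * (1 + s) * ((q + s) / (1 + s) - 1) := this
      _ = q * (q - 1) := by field_simp; ring
  have hB' : (1 - q) * s * (Real.log (q + s) - Real.log s) ≤ (1 - q) * q := by
    have hc : (0:ℝ) ≤ (1 - q) * s := mul_nonneg (by linarith) hs.le
    have := mul_le_mul_of_nonneg_left hB hc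
    calc (1 - q) * s * (Real.log (q + s) - Real.log s)
        ≤ (1 - q) * s * ((q + s) / s - 1) := this
      _ = (1 - q) * q := by field_simp; ring
  have hFm : Fm s q = -(q * (1 + s) * (Real.log (q + s) - Real.log (1 + s)))
      - ((1 - q) * s * (Real.log (q + s) - Real.log s)) := by
    unfold Fm; ring
  linarith [hA', hB']

lemma log_one_add_inv (s : ℝ) (hs : 0 < s) :
    Real.log (1 + 1 / s) = Real.log (1 + s) - Real.log s := by
  have h : 1 + 1 / s = (1 + s) / s := by field_simp; ring
  rw [h, Real.log_div (by positivity) (ne_of_gt hs)]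

lemma hasDerivAt_phi (s : ℝ) (hs : 0 < s) :
    HasDerivAt (fun s : ℝ => s * Real.log (1 + s) - s * Real.log s)
      (Real.log (1 + s) - Real.log s - (1 + s)⁻¹) s := by
  have h1s : (0:ℝ) < 1 + s := by linarith
  have hl : HasDerivAt (fun s : ℝ => Real.log (1 + s)) ((1 + s)⁻¹) s := by
    exact ((Real.hasDerivAt_log h1s.ne').comp s ((hasDerivAt_id s).const_add 1)).congr_deriv (mul_one _)
  have h1 : HasDerivAt (fun s : ℝ => s * Real.log (1 + s))
      (Real.log (1 + s) + s * (1 + s)⁻¹) s := by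
    have := (hasDerivAt_id s).mul hl
    refine this.congr_deriv ?_
    simp [id]
  have h2 : HasDerivAt (fun s : ℝ => s * Real.log s) (Real.log s + 1) s :=
    Real.hasDerivAt_mul_log hs.ne'
  have := h1.sub h2
  refine this.congr_deriv ?_
  have : s * (1 + s)⁻¹ = 1 - (1 + s)⁻¹ := by field_simp; ring
  rw [this]; ring

lemma phi_deriv_nonneg (s : ℝ) (hs : 0 < s) :
    0 ≤ Real.log (1 + s) - Real.log s - (1 + s)⁻¹ := by
  have h1s : (0:ℝ) < 1 + s := by linarith
  have := Real.log_le_sub_one_of_pos (x := s / (1 + s)) (by positivity)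
  rw [Real.log_div (ne_of_gt hs) (ne_of_gt h1s)] at this
  have h : s / (1 + s) - 1 = -(1 + s)⁻¹ := by field_simp; ring
  rw [h] at this
  linarith

lemma phi_mono : MonotoneOn (fun s : ℝ => s * Real.log (1 + s) - s * Real.log s) (Ioi 0) := by
  have hint : interior (Ioi (0:ℝ)) = Ioi 0 := interior_Ioi
  apply monotoneOn_of_deriv_nonneg (convex_Ioi 0)
  · exact fun s hs => ((hasDerivAt_phi s hs).continuousAt).continuousWithinAt
  · rw [hint]
    exact fun s hs => (hasDerivAt_phi s hs).differentiableAt.differentiableWithinAt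
  · rw [hint]
    intro s hs
    rw [(hasDerivAt_phi s hs).deriv]
    exact phi_deriv_nonneg s hs

lemma sL_lt_one (s : ℝ) (hs : 0 < s) : s * Real.log (1 + s) - s * Real.log s < 1 := by
  have h1s : (0:ℝ) < 1 + s := by linarith
  have hne : (1 + s) / s ≠ 1 := by
    intro h
    field_simp at h; linarith
  have := Real.log_lt_sub_one_of_pos (x := (1 + s) / s) (by positivity) hne
  rw [Real.log_div (ne_of_gt h1s) (ne_of_gt hs)] at this
  have h : (1 + s) / s - 1 = 1 / s := by field_simp; ring
  rw [h] at this
  have := mul_lt_mul_of_pos_left this hs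
  calc s * Real.log (1 + s) - s * Real.log s
      = s * (Real.log (1 + s) - Real.log s) := by ring
    _ < s * (1 / s) := this
    _ = 1 := by field_simp

lemma key (s₁ s₂ β : ℝ) (h1 : 0 < s₁) (h2 : 0 < s₂) (hβ1 : β ≤ 1)
    (hg1 : Fd s₂ 1 - β * Fd s₁ 1 = 0) :
    ∀ q ∈ Icc (0:ℝ) 1, Fm s₂ q - β * Fm s₁ q ≤ 0 := by
  intro q hq
  set D : ℝ → ℝ := fun t => Fm s₂ t - β * Fm s₁ t with hDdef
  set g : ℝ → ℝ := fun t => Fd s₂ t - β * Fd s₁ t with hgdef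
  set n : ℝ → ℝ := fun t => β * (t + s₂) - (t + s₁) with hndef
  have hpos1 : ∀ t ∈ Icc (0:ℝ) 1, 0 < t + s₁ := fun t ht => by have := ht.1; linarith
  have hpos2 : ∀ t ∈ Icc (0:ℝ) 1, 0 < t + s₂ := fun t ht => by have := ht.1; linarith
  have hD' : ∀ t ∈ Icc (0:ℝ) 1, HasDerivAt D (g t) t := fun t ht =>
    (hasDerivAt_Fm s₂ t (hpos2 t ht)).sub ((hasDerivAt_Fm s₁ t (hpos1 t ht)).const_mul β)
  have hg' : ∀ t ∈ Icc (0:ℝ) 1,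
      HasDerivAt g (-(t + s₂)⁻¹ - β * -(t + s₁)⁻¹) t := fun t ht =>
    (hasDerivAt_Fd s₂ t (hpos2 t ht)).sub ((hasDerivAt_Fd s₁ t (hpos1 t ht)).const_mul β)
  have hsign : ∀ t ∈ Icc (0:ℝ) 1,
      -(t + s₂)⁻¹ - β * -(t + s₁)⁻¹ = n t / ((t + s₁) * (t + s₂)) := by
    intro t ht
    have ha := hpos1 t ht; have hb := hpos2 t ht
    simp only [hndef]
    field_simp
    ring
  have hn_anti : ∀ u v : ℝ, u ≤ v → n v ≤ n u := by
    intro u v huv; simp only [hndef]; nlinarith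
  have g1 : g 1 = 0 := hg1
  have D0 : D 0 = 0 := by simp [hDdef, Fm_zero]
  have D1 : D 1 = 0 := by simp [hDdef, Fm_one]
  -- monotonicity helpers for g
  have gmono : ∀ a b : ℝ, 0 ≤ a → b ≤ 1 → 0 ≤ n b → MonotoneOn g (Icc a b) := by
    intro a b ha hb hnb
    have hsub : Icc a b ⊆ Icc 0 1 := Icc_subset_Icc ha hb
    apply monotoneOn_of_deriv_nonneg (convex_Icc a b)
    · exact fun t ht => ((hg' t (hsub ht)).continuousAt).continuousWithinAt
    · intro t ht
      rw [interior_Icc] at ht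
      exact (hg' t (hsub (Ioo_subset_Icc_self ht))).differentiableAt.differentiableWithinAt
    · intro t ht
      rw [interior_Icc] at ht
      have htm := hsub (Ioo_subset_Icc_self ht)
      rw [(hg' t htm).deriv, hsign t htm]
      exact div_nonneg (le_trans hnb (hn_anti t b ht.2.le))
        (le_of_lt (mul_pos (hpos1 t htm) (hpos2 t htm)))
  have ganti : ∀ a : ℝ, 0 ≤ a → n a ≤ 0 → AntitoneOn g (Icc a 1) := by
    intro a ha hna
    have hsub : Icc a 1 ⊆ Icc 0 1 := Icc_subset_Icc ha le_rfl
    apply antitoneOn_of_deriv_nonpos (convex_Icc a 1)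
    · exact fun t ht => ((hg' t (hsub ht)).continuousAt).continuousWithinAt
    · intro t ht
      rw [interior_Icc] at ht
      exact (hg' t (hsub (Ioo_subset_Icc_self ht))).differentiableAt.differentiableWithinAt
    · intro t ht
      rw [interior_Icc] at ht
      have htm := hsub (Ioo_subset_Icc_self ht)
      rw [(hg' t htm).deriv, hsign t htm]
      exact div_nonpos_of_nonpos_of_nonneg (le_trans (hn_anti a t ht.1.le) hna)
        (le_of_lt (mul_pos (hpos1 t htm) (hpos2 t htm)))
  -- monotonicity helpers for D
  have Dmono : ∀ a b : ℝ, 0 ≤ a → b ≤ 1 → (∀ t ∈ Icc a b, 0 ≤ g t) →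
      MonotoneOn D (Icc a b) := by
    intro a b ha hb hgp
    have hsub : Icc a b ⊆ Icc 0 1 := Icc_subset_Icc ha hb
    apply monotoneOn_of_deriv_nonneg (convex_Icc a b)
    · exact fun t ht => ((hD' t (hsub ht)).continuousAt).continuousWithinAt
    · intro t ht
      rw [interior_Icc] at ht
      exact (hD' t (hsub (Ioo_subset_Icc_self ht))).differentiableAt.differentiableWithinAt
    · intro t ht
      rw [interior_Icc] at ht
      have htm := Ioo_subset_Icc_self ht
      rw [(hD' t (hsub htm)).deriv]
      exact hgp t htm
  have Danti : ∀ a b : ℝ, 0 ≤ a → b ≤ 1 → (∀ t ∈ Icc a b, g t ≤ 0) →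
      AntitoneOn D (Icc a b) := by
    intro a b ha hb hgp
    have hsub : Icc a b ⊆ Icc 0 1 := Icc_subset_Icc ha hb
    apply antitoneOn_of_deriv_nonpos (convex_Icc a b)
    · exact fun t ht => ((hD' t (hsub ht)).continuousAt).continuousWithinAt
    · intro t ht
      rw [interior_Icc] at ht
      exact (hD' t (hsub (Ioo_subset_Icc_self ht))).differentiableAt.differentiableWithinAt
    · intro t ht
      rw [interior_Icc] at ht
      have htm := Ioo_subset_Icc_self ht
      rw [(hD' t (hsub htm)).deriv]
      exact hgp t htm
  -- main case split
  show D q ≤ 0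
  by_cases hgq : 0 ≤ g q
  · have hgpos : ∀ t ∈ Icc q 1, 0 ≤ g t := by
      intro t ht
      by_cases hnt : 0 ≤ n t
      · have hm := gmono q t hq.1 ht.2 hnt
        have := hm ⟨le_rfl, ht.1⟩ ⟨ht.1, le_rfl⟩ ht.1
        linarith
      · have ha := ganti t (le_trans hq.1 ht.1) (le_of_not_ge hnt)
        have := ha ⟨le_rfl, ht.2⟩ ⟨ht.2, le_rfl⟩ ht.2
        rw [g1] at this
        linarith
    have hDm := Dmono q 1 hq.1 le_rfl hgpos
    have := hDm ⟨le_rfl, hq.2⟩ ⟨hq.2, le_rfl⟩ hq.2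
    rw [D1] at this
    exact this
  · push_neg at hgq
    have hnpos : ∀ t ∈ Icc (0:ℝ) q, 0 ≤ n t := by
      intro t ht
      by_contra hnt
      push_neg at hnt
      have ha := ganti t ht.1 hnt.le
      have := ha ⟨ht.2, hq.2⟩ ⟨le_trans ht.2 hq.2, le_rfl⟩ hq.2
      rw [g1] at this
      linarith
    have hgneg : ∀ t ∈ Icc (0:ℝ) q, g t ≤ 0 := by
      intro t ht
      have hm := gmono 0 q le_rfl hq.2 (hnpos q ⟨hq.1, le_rfl⟩)
      have := hm ⟨ht.1, ht.2⟩ ⟨hq.1, le_rfl⟩ ht.2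
      linarith
    have hDa := Danti 0 q le_rfl hq.2 hgneg
    have := hDa ⟨le_rfl, hq.1⟩ ⟨hq.1, le_rfl⟩ hq.1
    rw [D0] at this
    exact this


theorem more_capable (s₁ s₂ α : ℝ) (h1 : 0 < s₁) (h12 : s₁ ≤ s₂)
    (hα : (s₂ * Real.log (1 + 1 / s₂) - 1) / (s₁ * Real.log (1 + 1 / s₁) - 1) ≤ α) :
    ∀ q ∈ Icc (0:ℝ) 1,
      (-(q + s₂) * Real.log (q + s₂) + q * (1 + s₂) * Real.log (1 + s₂)
        + (1 - q) * s₂ * Real.log s₂) ≤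
      α * (-(q + s₁) * Real.log (q + s₁) + q * (1 + s₁) * Real.log (1 + s₁)
        + (1 - q) * s₁ * Real.log s₁) := by
  have h2 : 0 < s₂ := lt_of_lt_of_le h1 h12
  set A₁ : ℝ := s₁ * Real.log (1 + 1 / s₁) - 1 with hA1
  set A₂ : ℝ := s₂ * Real.log (1 + 1 / s₂) - 1 with hA2
  have hA1eq : A₁ = s₁ * Real.log (1 + s₁) - s₁ * Real.log s₁ - 1 := by
    rw [hA1, log_one_add_inv s₁ h1]; ring
  have hA2eq : A₂ = s₂ * Real.log (1 + s₂) - s₂ * Real.log s₂ - 1 := by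
    rw [hA2, log_one_add_inv s₂ h2]; ring
  have hA1neg : A₁ < 0 := by
    have := sL_lt_one s₁ h1; rw [hA1eq]; linarith
  have hA2neg : A₂ < 0 := by
    have := sL_lt_one s₂ h2; rw [hA2eq]; linarith
  have hA12 : A₁ ≤ A₂ := by
    have := phi_mono (mem_Ioi.2 h1) (mem_Ioi.2 h2) h12
    simp only at this
    rw [hA1eq, hA2eq]; linarith
  set β : ℝ := A₂ / A₁ with hβ
  have hβ1 : β ≤ 1 := by
    rw [hβ, div_le_iff_of_neg hA1neg]; linarith
  have hβα : β ≤ α := hα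
  have hFd1 : ∀ s : ℝ, 0 < s →
      Fd s 1 = s * Real.log (1 + s) - s * Real.log s - 1 := by
    intro s hs
    unfold Fd; ring
  have hg1 : Fd s₂ 1 - β * Fd s₁ 1 = 0 := by
    rw [hFd1 s₁ h1, hFd1 s₂ h2, ← hA1eq, ← hA2eq, hβ,
      div_mul_cancel₀ _ (ne_of_lt hA1neg)]
    ring
  intro q hq
  have hk := key s₁ s₂ β h1 h2 hβ1 hg1 q hq
  have hF1 := Fm_nonneg s₁ h1 hq
  have hmul : β * Fm s₁ q ≤ α * Fm s₁ q := mul_le_mul_of_nonneg_right hβα hF1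
  show Fm s₂ q ≤ α * Fm s₁ q
  linarith
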